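/- arXiv:math/0501265 — 3 statements merged into one kernel-verified Lean document; each statement's English description precedes it below -/
import Mathlib

section
/- Let T₁ ≤ T be reals, a ≥ 0 and κ ≥ 0 with κ·(T − T₁) ≤ 1. Let φ, ψ : [T₁, T] → ℝ be continuous nonnegative functions such that for every t ∈ [T₁, T], φ(t) + ψ(t) ≤ a + κ(T − t)·(∫_t^T φ(s) ds + ψ(t)). Then φ(t) ≤ a·e^{T−t} for every t ∈ [T₁, T]. -/
/-- Deterministic backward Gronwall argument from Steps 2-3 of the proof of
Proposition 4.5: if `φ(t) + ψ(t) ≤ a + κ(T−t)(∫_t^T φ + ψ(t))` on `[T₁, T]`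
with `κ(T − T₁) ≤ 1`, then `φ(t) ≤ a e^{T−t}`. -/
theorem stmt_10 (T₁ T a κ : ℝ) (hT : T₁ ≤ T) (ha : 0 ≤ a) (hκ : 0 ≤ κ)
    (hκT : κ * (T - T₁) ≤ 1)
    (φ ψ : ℝ → ℝ)
    (hφc : ContinuousOn φ (Set.Icc T₁ T)) (hψc : ContinuousOn ψ (Set.Icc T₁ T))
    (hφ0 : ∀ t ∈ Set.Icc T₁ T, 0 ≤ φ t) (hψ0 : ∀ t ∈ Set.Icc T₁ T, 0 ≤ ψ t)
    (hineq : ∀ t ∈ Set.Icc T₁ T,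
      φ t + ψ t ≤ a + κ * (T - t) * ((∫ s in t..T, φ s) + ψ t)) :
    ∀ t ∈ Set.Icc T₁ T, φ t ≤ a * Real.exp (T - t) := by
  -- continuous extension of φ to all of ℝ
  set g : ℝ → ℝ := Set.IccExtend hT ((Set.Icc T₁ T).restrict φ) with hg_def
  have hg_cont : Continuous g := continuous_IccExtend_iff.2 hφc.restrict
  have hg_eq : ∀ x ∈ Set.Icc T₁ T, g x = φ x := fun x hx => by
    simp [hg_def, Set.IccExtend_of_mem hT _ hx]
    rfl
  have hg0 : ∀ x, 0 ≤ g x := fun x => hφ0 _ (Set.projIcc T₁ T hT x).2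
  -- F t = ∫_t^T g
  set F : ℝ → ℝ := fun t => ∫ s in t..T, g s with hF_def
  have hF0 : ∀ t, t ≤ T → 0 ≤ F t := fun t ht =>
    intervalIntegral.integral_nonneg ht (fun x _ => hg0 x)
  have hFint : ∀ t ∈ Set.Icc T₁ T, (∫ s in t..T, φ s) = F t := by
    intro t ht
    exact intervalIntegral.integral_congr fun x hx => by
      rw [Set.uIcc_of_le ht.2] at hx
      exact (hg_eq x ⟨le_trans ht.1 hx.1, hx.2⟩).symm
  -- key pointwise bound: φ t ≤ a + F t on [T₁, T]
  have hkey : ∀ t ∈ Set.Icc T₁ T, φ t ≤ a + F t := by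
    intro t ht
    have hκt : κ * (T - t) ≤ 1 :=
      le_trans (mul_le_mul_of_nonneg_left (by linarith [ht.1]) hκ) hκT
    have hκt0 : 0 ≤ κ * (T - t) := mul_nonneg hκ (by linarith [ht.2])
    have h1 := hineq t ht
    rw [hFint t ht] at h1
    have hψ := hψ0 t ht
    have hF := hF0 t ht.2
    nlinarith [mul_le_of_le_one_left hψ hκt, mul_le_of_le_one_left hF hκt]
  -- H t = exp t * (F t + a) is monotone on [T₁, T]
  have hFderiv : ∀ t : ℝ, HasDerivAt F (-g t) t := by
    intro t
    exact intervalIntegral.integral_hasDerivAt_left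
      (hg_cont.intervalIntegrable _ _)
      (hg_cont.stronglyMeasurableAtFilter _ _) hg_cont.continuousAt
  set H : ℝ → ℝ := fun t => Real.exp t * (F t + a) with hH_def
  have hHderiv : ∀ t : ℝ, HasDerivAt H (Real.exp t * (F t + a - g t)) t := by
    intro t
    have := (Real.hasDerivAt_exp t).mul ((hFderiv t).add_const a)
    exact this.congr_deriv (by ring)
  have hHmono : MonotoneOn H (Set.Icc T₁ T) := by
    apply monotoneOn_of_hasDerivWithinAt_nonneg (convex_Icc T₁ T)
      (fun t _ => (hHderiv t).continuousAt.continuousWithinAt)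
      (fun t ht => (hHderiv t).hasDerivWithinAt)
    intro t ht
    rw [interior_Icc] at ht
    have ht' : t ∈ Set.Icc T₁ T := Set.mem_Icc_of_Ioo ht
    have : g t ≤ a + F t := by rw [hg_eq t ht']; exact hkey t ht'
    have := Real.exp_pos t
    nlinarith
  -- conclude
  intro t ht
  have hHT : H t ≤ H T := hHmono ht (Set.right_mem_Icc.2 hT) ht.2
  have hFT : F T = 0 := by simp [hF_def]
  rw [hH_def] at hHT
  simp only [hFT, zero_add] at hHT
  have hexp : Real.exp t > 0 := Real.exp_pos t
  have h2 : F t + a ≤ a * Real.exp (T - t) := by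
    rw [Real.exp_sub, mul_div_assoc', le_div_iff₀ hexp]
    nlinarith [hHT]
  calc φ t ≤ a + F t := hkey t ht
    _ ≤ a * Real.exp (T - t) := by linarith [h2]
end

section
/- Let O ⊆ ℝⁿ be open, χ : O → ℝ of class C², and c < c₁ reals such that K₁ := {x ∈ O : χ(x) ≤ c₁} is compact, convex and nonempty, the set {x ∈ O : χ(x) < c} is nonempty, and there is α > 0 with ⟨u, Hess χ(x) u⟩ ≥ α‖u‖² for all x ∈ K₁ and all u ∈ ℝⁿ. Let h : ℝ → ℝ be C¹, nonnegative and nondecreasing with h(s) = 0 if and only if s ≤ c. Let m ≥ 1, ζ > 0, C₀ > 0, and let g : ℝ^d × K₁ × ℝ^{n×m} → ℝⁿ satisfy: (a) ‖g(b,x,z)‖ ≤ C₀(1 + ‖z‖) for all (b,x,z); (b) ‖g(b,x,z) − g(b,x',z)‖ ≤ C₀‖x − x'‖(1 + ‖z‖) for all b, x, x', z; (c) ⟨∇χ(x), g(b,x,z)⟩ ≥ ζ for all b, z whenever χ(x) = c. Then there exists λ ≥ 0 such that for every b ∈ ℝ^d, every x ∈ K₁ and every n×m real matrix z with columns z₁,…,z_m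 (Frobenius norm ‖z‖): h'(χ(x)) · ((1/2) Σ_{i=1}^m ⟨z_i, Hess χ(x) z_i⟩ + ⟨∇χ(x), g(b,x,z)⟩) + λ·h(χ(x)) ≥ 0. -/
open Filter Topology Set

set_option maxHeartbeats 2000000


/-- Analytic core of the submartingale construction in Proposition 4.6 and
Theorem 5.1: for `h` vanishing exactly on `(-∞, c]`, a strictly convex `χ`, and
a drift `g` with linear growth, Lipschitz dependence on `x`, and pointing
strictly outward on the level set `{χ = c}`, there is `λ ≥ 0` making the
pointwise expression
`h'(χ(x)) ((1/2) Σᵢ ⟨zᵢ, Hess χ(x) zᵢ⟩ + ⟨∇χ(x), g(b,x,z)⟩) + λ h(χ(x))`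
nonnegative on `K₁ = {x ∈ O : χ(x) ≤ c₁}`. -/
theorem stmt_12 (n d m : ℕ) (hm : 1 ≤ m)
    (O : Set (EuclideanSpace ℝ (Fin n))) (hO : IsOpen O)
    (χ : EuclideanSpace ℝ (Fin n) → ℝ) (hχ : ContDiffOn ℝ 2 χ O)
    (c c₁ : ℝ) (hcc : c < c₁)
    (K₁ : Set (EuclideanSpace ℝ (Fin n))) (hK₁ : K₁ = {x ∈ O | χ x ≤ c₁})
    (hK₁c : IsCompact K₁) (hK₁conv : Convex ℝ K₁) (hK₁ne : K₁.Nonempty)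
    (hsubc : {x ∈ O | χ x < c}.Nonempty)
    (α : ℝ) (hα : 0 < α)
    (hHess : ∀ x ∈ K₁, ∀ u : EuclideanSpace ℝ (Fin n),
      α * ‖u‖ ^ 2 ≤ fderiv ℝ (fderiv ℝ χ) x u u)
    (h : ℝ → ℝ) (hh : ContDiff ℝ 1 h) (hh0 : ∀ r, 0 ≤ h r) (hhmono : Monotone h)
    (hhzero : ∀ r, h r = 0 ↔ r ≤ c)
    (ζ C₀ : ℝ) (hζ : 0 < ζ) (hC₀ : 0 < C₀)
    (g : EuclideanSpace ℝ (Fin d) → EuclideanSpace ℝ (Fin n) →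
      EuclideanSpace ℝ (Fin n × Fin m) → EuclideanSpace ℝ (Fin n))
    (hg_bd : ∀ b, ∀ x ∈ K₁, ∀ z, ‖g b x z‖ ≤ C₀ * (1 + ‖z‖))
    (hg_lip : ∀ b, ∀ x ∈ K₁, ∀ x' ∈ K₁, ∀ z,
      ‖g b x z - g b x' z‖ ≤ C₀ * ‖x - x'‖ * (1 + ‖z‖))
    (hg_out : ∀ b z, ∀ x ∈ K₁, χ x = c → ζ ≤ fderiv ℝ χ x (g b x z)) :
    ∃ lam : ℝ, 0 ≤ lam ∧ ∀ b, ∀ x ∈ K₁, ∀ z : EuclideanSpace ℝ (Fin n × Fin m),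
      0 ≤ deriv h (χ x) *
            ((1/2) * ∑ i : Fin m,
                fderiv ℝ (fderiv ℝ χ) x
                  ((WithLp.equiv 2 (Fin n → ℝ)).symm (fun k => z (k, i)))
                  ((WithLp.equiv 2 (Fin n → ℝ)).symm (fun k => z (k, i)))
              + fderiv ℝ χ x (g b x z))
          + lam * h (χ x) := by
  classical
  have hKO : K₁ ⊆ O := by rw [hK₁]; exact fun x hx => hx.1
  have hKc₁ : ∀ x ∈ K₁, χ x ≤ c₁ := by
    intro x hx; rw [hK₁] at hx; exact hx.2
  -- continuity facts
  have hχcont : ContinuousOn χ O := hχ.continuousOn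
  have hdc : ContinuousOn (fderiv ℝ χ) O :=
    hχ.continuousOn_fderiv_of_isOpen hO (by norm_num)
  -- bound on the gradient over K₁
  obtain ⟨M₀, hM₀⟩ := hK₁c.exists_bound_of_continuousOn (hdc.mono hKO)
  set M : ℝ := max M₀ 0 with hMdef
  have hMnn : 0 ≤ M := le_max_right _ _
  have hM : ∀ x ∈ K₁, ‖fderiv ℝ χ x‖ ≤ M := fun x hx =>
    le_trans (hM₀ x hx) (le_max_left _ _)
  -- facts about h
  have hdiff : Differentiable ℝ h := hh.differentiable one_ne_zero
  have hder_cont : Continuous (deriv h) := hh.continuous_deriv le_rfl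
  have hder_nonneg : ∀ r, 0 ≤ deriv h r := by
    intro r
    have h1 : Tendsto (slope h r) (𝓝[>] r) (𝓝 (deriv h r)) :=
      (hasDerivAt_iff_tendsto_slope.1 (hdiff r).hasDerivAt).mono_left
        (nhdsWithin_mono _ fun y hy => ne_of_gt hy)
    refine ge_of_tendsto h1 ?_
    filter_upwards [self_mem_nhdsWithin] with y hy
    rw [slope_def_field]
    have hry : r < y := hy
    exact div_nonneg (sub_nonneg.2 (hhmono hry.le)) (sub_nonneg.2 hry.le)
  have hder_zero_lt : ∀ r < c, deriv h r = 0 := by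
    intro r hr
    have heq : h =ᶠ[𝓝 r] fun _ => (0 : ℝ) := by
      filter_upwards [Iio_mem_nhds hr] with y hy
      exact (hhzero y).2 (le_of_lt hy)
    rw [heq.deriv_eq]
    exact deriv_const r 0
  have hder_zero : ∀ r ≤ c, deriv h r = 0 := by
    intro r hr
    rcases hr.lt_or_eq with hlt | rfl
    · exact hder_zero_lt r hlt
    · have h1 : Tendsto (deriv h) (𝓝[<] r) (𝓝 (deriv h r)) :=
        (hder_cont.tendsto r).mono_left nhdsWithin_le_nhds
      have h2 : Tendsto (deriv h) (𝓝[<] r) (𝓝 0) := by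
        refine Tendsto.congr' ?_ tendsto_const_nhds
        filter_upwards [self_mem_nhdsWithin] with y hy
        exact (hder_zero_lt y hy).symm
      exact tendsto_nhds_unique h1 h2
  -- bound on deriv h on [c, c₁]
  obtain ⟨D₀, hD₀⟩ := (isCompact_Icc (a := c) (b := c₁)).exists_bound_of_continuousOn
    hder_cont.continuousOn
  set D : ℝ := max D₀ 0 with hDdef
  have hDnn : 0 ≤ D := le_max_right _ _
  have hD : ∀ r ∈ Set.Icc c c₁, deriv h r ≤ D := by
    intro r hr
    have := hD₀ r hr
    rw [Real.norm_eq_abs] at this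
    exact le_trans (le_abs_self _) (le_trans this (le_max_left _ _))
  -- norms of euclidean vectors
  have hU : ∀ (z : EuclideanSpace ℝ (Fin n × Fin m)) (i : Fin m),
      ‖(WithLp.equiv 2 (Fin n → ℝ)).symm (fun k => z (k, i))‖ ^ 2
        = ∑ k : Fin n, (z (k, i)) ^ 2 := by
    intro z i
    rw [EuclideanSpace.norm_eq,
      Real.sq_sqrt (Finset.sum_nonneg fun _ _ => sq_nonneg _)]
    simp [Real.norm_eq_abs, sq_abs]
  have hnorm_sq : ∀ z : EuclideanSpace ℝ (Fin n × Fin m),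
      ‖z‖ ^ 2 = ∑ i : Fin m, ∑ k : Fin n, (z (k, i)) ^ 2 := by
    intro z
    rw [EuclideanSpace.norm_eq,
      Real.sq_sqrt (Finset.sum_nonneg fun _ _ => sq_nonneg _)]
    rw [Fintype.sum_prod_type, Finset.sum_comm]
    simp [Real.norm_eq_abs, sq_abs]
  -- lower bound on the Hessian term
  have hQ : ∀ x ∈ K₁, ∀ z : EuclideanSpace ℝ (Fin n × Fin m),
      α * ‖z‖ ^ 2 ≤ ∑ i : Fin m,
        fderiv ℝ (fderiv ℝ χ) x
          ((WithLp.equiv 2 (Fin n → ℝ)).symm (fun k => z (k, i)))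
          ((WithLp.equiv 2 (Fin n → ℝ)).symm (fun k => z (k, i))) := by
    intro x hx z
    calc α * ‖z‖ ^ 2
        = ∑ i : Fin m,
            α * ‖(WithLp.equiv 2 (Fin n → ℝ)).symm (fun k => z (k, i))‖ ^ 2 := by
          rw [← Finset.mul_sum, hnorm_sq z]
          congr 1
          exact Finset.sum_congr rfl fun i _ => (hU z i).symm
      _ ≤ _ := Finset.sum_le_sum fun i _ => hHess x hx _
  -- lower bound on the gradient term
  have hlin : ∀ b, ∀ x ∈ K₁, ∀ z,
      -(M * C₀ * (1 + ‖z‖)) ≤ fderiv ℝ χ x (g b x z) := by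
    intro b x hx z
    have h1 : ‖fderiv ℝ χ x (g b x z)‖ ≤ M * (C₀ * (1 + ‖z‖)) := by
      refine le_trans ((fderiv ℝ χ x).le_opNorm _) ?_
      exact mul_le_mul (hM x hx) (hg_bd b x hx z) (norm_nonneg _) hMnn
    rw [Real.norm_eq_abs] at h1
    have := neg_abs_le (fderiv ℝ χ x (g b x z))
    nlinarith
  -- the key claim near the level set {χ = c}
  obtain ⟨t₀, ht₀pos, ht₀⟩ : ∃ t₀ > 0, ∀ x ∈ K₁, c ≤ χ x → χ x ≤ c + t₀ →
      ∀ b z, 0 ≤ α / 2 * ‖z‖ ^ 2 + fderiv ℝ χ x (g b x z) := by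
    by_contra hcon
    push_neg at hcon
    choose X hXK hXc hXc' B Z hneg using fun k : ℕ =>
      hcon (1 / ((k : ℝ) + 1)) (by positivity)
    obtain ⟨xs, hxsK, φ, hφ, hconv⟩ := hK₁c.tendsto_subseq hXK
    have hxsO : O ∈ 𝓝 xs := hO.mem_nhds (hKO hxsK)
    -- χ xs = c
    have hχat : ContinuousAt χ xs := hχcont.continuousAt hxsO
    have h1 : Tendsto (fun k => χ (X (φ k))) atTop (𝓝 (χ xs)) :=
      hχat.tendsto.comp hconv
    have h2 : Tendsto (fun k => χ (X (φ k))) atTop (𝓝 c) := by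
      have hub : Tendsto (fun k : ℕ => c + 1 / ((φ k : ℝ) + 1)) atTop (𝓝 c) := by
        have : Tendsto (fun k : ℕ => 1 / ((φ k : ℝ) + 1)) atTop (𝓝 0) :=
          tendsto_one_div_add_atTop_nhds_zero_nat.comp hφ.tendsto_atTop
        simpa using (tendsto_const_nhds (x := c)).add this
      refine tendsto_of_tendsto_of_tendsto_of_le_of_le tendsto_const_nhds hub
        (fun k => hXc (φ k)) (fun k => hXc' (φ k))
    have hχxs : χ xs = c := tendsto_nhds_unique h1 h2
    -- uniform bound on ‖Z k‖
    set R : ℝ := max 1 (4 * (M * C₀) / α) with hRdef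
    have hR1 : (1 : ℝ) ≤ R := le_max_left _ _
    have hZbd : ∀ k, ‖Z k‖ ≤ R := by
      intro k
      by_contra hRk
      push_neg at hRk
      have ht1 : 1 ≤ ‖Z k‖ := le_of_lt (lt_of_le_of_lt hR1 hRk)
      have ht2 : 4 * (M * C₀) / α < ‖Z k‖ := lt_of_le_of_lt (le_max_right _ _) hRk
      have h3 := hneg k
      have h4 := hlin (B k) (X k) (hXK k) (Z k)
      have h5 : 4 * (M * C₀) < α * ‖Z k‖ := by
        rw [div_lt_iff₀ hα] at ht2; nlinarith
      nlinarith [norm_nonneg (Z k), mul_nonneg hMnn hC₀.le]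
    -- error term tends to zero
    have hgat : ContinuousAt (fderiv ℝ χ) xs := hdc.continuousAt hxsO
    have hA : Tendsto (fun k => ‖fderiv ℝ χ (X (φ k)) - fderiv ℝ χ xs‖)
        atTop (𝓝 0) := by
      have := ((hgat.tendsto.comp hconv).sub_const (fderiv ℝ χ xs)).norm
      simpa using this
    have hB : Tendsto (fun k => ‖X (φ k) - xs‖) atTop (𝓝 0) := by
      have := (hconv.sub_const xs).norm
      simpa using this
    set E : ℕ → ℝ := fun k =>
      ‖fderiv ℝ χ (X (φ k)) - fderiv ℝ χ xs‖ * (C₀ * (1 + R))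
        + M * (C₀ * ‖X (φ k) - xs‖ * (1 + R)) with hEdef
    have hE : Tendsto E atTop (𝓝 0) := by
      have h6 := (hA.mul_const (C₀ * (1 + R))).add
        ((hB.const_mul (M * C₀)).mul_const (1 + R))
      simp only [zero_mul, mul_zero, add_zero, zero_add] at h6
      refine h6.congr fun k => ?_
      simp only [hEdef]; ring
    obtain ⟨k, hk⟩ := (hE.eventually (gt_mem_nhds hζ)).exists
    -- derive the contradiction at index k
    set x := X (φ k) with hxdef
    set b := B (φ k)
    set z := Z (φ k)
    have hxK : x ∈ K₁ := hXK (φ k)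
    have hζ' := hg_out b z xs hxsK hχxs
    have hzR : ‖z‖ ≤ R := hZbd (φ k)
    have key : fderiv ℝ χ xs (g b xs z) ≤ fderiv ℝ χ x (g b x z) + E k := by
      have e1 : fderiv ℝ χ xs (g b xs z) - fderiv ℝ χ x (g b x z)
          = fderiv ℝ χ xs (g b xs z - g b x z)
            + (fderiv ℝ χ xs - fderiv ℝ χ x) (g b x z) := by
        simp only [map_sub, ContinuousLinearMap.sub_apply]; ring
      have e2 : fderiv ℝ χ xs (g b xs z - g b x z)
          ≤ M * (C₀ * ‖X (φ k) - xs‖ * (1 + R)) := by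
        refine le_trans (le_abs_self _) ?_
        rw [← Real.norm_eq_abs]
        refine le_trans ((fderiv ℝ χ xs).le_opNorm _) ?_
        have hb1 : ‖g b xs z - g b x z‖ ≤ C₀ * ‖X (φ k) - xs‖ * (1 + R) := by
          have := hg_lip b xs hxsK x hxK z
          rw [norm_sub_rev (xs : EuclideanSpace ℝ (Fin n))] at this
          refine le_trans this ?_
          have hz1 : (1 : ℝ) + ‖z‖ ≤ 1 + R := by linarith
          have : 0 ≤ C₀ * ‖X (φ k) - xs‖ := by positivity
          nlinarith [norm_nonneg (X (φ k) - xs)]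
        exact mul_le_mul (hM xs hxsK) hb1 (norm_nonneg _)
          (by positivity)
      have e3 : (fderiv ℝ χ xs - fderiv ℝ χ x) (g b x z)
          ≤ ‖fderiv ℝ χ (X (φ k)) - fderiv ℝ χ xs‖ * (C₀ * (1 + R)) := by
        refine le_trans (le_abs_self _) ?_
        rw [← Real.norm_eq_abs]
        refine le_trans ((fderiv ℝ χ xs - fderiv ℝ χ x).le_opNorm _) ?_
        rw [norm_sub_rev]
        refine mul_le_mul le_rfl ?_ (norm_nonneg _) (norm_nonneg _)
        refine le_trans (hg_bd b x hxK z) ?_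
        have hz1 : (1 : ℝ) + ‖z‖ ≤ 1 + R := by linarith
        nlinarith
      simp only [hEdef]
      linarith
    have hnegk := hneg (φ k)
    nlinarith [sq_nonneg ‖z‖, norm_nonneg z]
  -- assemble the final constant
  set t₁ : ℝ := min t₀ (c₁ - c) with ht₁def
  have ht₁pos : 0 < t₁ := lt_min ht₀pos (by linarith)
  have hh₀pos : 0 < h (c + t₁) := by
    rcases (hh0 (c + t₁)).lt_or_eq with hlt | heq
    · exact hlt
    · exfalso
      have := (hhzero (c + t₁)).1 heq.symm
      linarith
  set h₀ : ℝ := h (c + t₁) with hh₀def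
  set Bc : ℝ := M * C₀ + (M * C₀) ^ 2 / (2 * α) with hBcdef
  have hBcnn : 0 ≤ Bc := by
    have : 0 ≤ M * C₀ := mul_nonneg hMnn hC₀.le
    positivity
  refine ⟨D * Bc / h₀, by positivity, ?_⟩
  intro b x hx z
  set Q : ℝ := ∑ i : Fin m,
    fderiv ℝ (fderiv ℝ χ) x
      ((WithLp.equiv 2 (Fin n → ℝ)).symm (fun k => z (k, i)))
      ((WithLp.equiv 2 (Fin n → ℝ)).symm (fun k => z (k, i))) with hQdef
  set G : ℝ := fderiv ℝ χ x (g b x z) with hGdef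
  have hQz : α * ‖z‖ ^ 2 ≤ Q := hQ x hx z
  have hGz : -(M * C₀ * (1 + ‖z‖)) ≤ G := hlin b x hx z
  rcases le_or_gt (χ x) c with hc | hc
  · rw [hder_zero _ hc, (hhzero _).2 hc]
    simp
  · have hdnn := hder_nonneg (χ x)
    rcases le_or_gt (χ x) (c + t₀) with hc2 | hc2
    · -- near the level set: the bracket is nonnegative
      have hb := ht₀ x hx hc.le hc2 b z
      have hbr : 0 ≤ 1 / 2 * Q + G := by nlinarith
      have : 0 ≤ deriv h (χ x) * (1 / 2 * Q + G) := mul_nonneg hdnn hbr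
      have h7 : 0 ≤ D * Bc / h₀ * h (χ x) :=
        mul_nonneg (div_nonneg (mul_nonneg hDnn hBcnn) hh₀pos.le) (hh0 _)
      linarith
    · -- far from the level set: use lam
      have hrange : χ x ∈ Set.Icc c c₁ := ⟨hc.le, hKc₁ x hx⟩
      have hdD := hD _ hrange
      have hbr : -Bc ≤ 1 / 2 * Q + G := by
        have h2 : M * C₀ * ‖z‖ - α / 2 * ‖z‖ ^ 2 ≤ (M * C₀) ^ 2 / (2 * α) := by
          rw [le_div_iff₀ (by positivity : (0 : ℝ) < 2 * α)]
          nlinarith [sq_nonneg (α * ‖z‖ - M * C₀)]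
        rw [hBcdef]
        linarith [hQz, hGz, h2]
      have hhx : h₀ ≤ h (χ x) := by
        refine hhmono ?_
        have : t₁ ≤ t₀ := min_le_left _ _
        linarith
      have h8 : deriv h (χ x) * (1 / 2 * Q + G) ≥ deriv h (χ x) * (-Bc) :=
        mul_le_mul_of_nonneg_left hbr hdnn
      have h9 : deriv h (χ x) * (-Bc) ≥ D * (-Bc) := by nlinarith
      have h10 : D * Bc / h₀ * h (χ x) ≥ D * Bc / h₀ * h₀ :=
        mul_le_mul_of_nonneg_left hhx (by positivity)
      have h11 : D * Bc / h₀ * h₀ = D * Bc := div_mul_cancel₀ _ (ne_of_gt hh₀pos)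
      calc (0 : ℝ) = D * (-Bc) + D * Bc := by ring
        _ ≤ deriv h (χ x) * (-Bc) + D * Bc := by linarith
        _ ≤ deriv h (χ x) * (1 / 2 * Q + G) + D * Bc := by linarith
        _ = deriv h (χ x) * (1 / 2 * Q + G) + D * Bc / h₀ * h₀ := by rw [h11]
        _ ≤ deriv h (χ x) * (1 / 2 * Q + G) + D * Bc / h₀ * h (χ x) := by linarith
end

section
/- Let χ : ℝⁿ → ℝ be C² with χ(0) = 0, ∇χ(0) = 0, and ⟨u, Hess χ(y) u⟩ ≥ λ‖u‖² for all y, u ∈ ℝⁿ, where λ > 0. Let c > 0 and c₂ > 0, and define F(y) = √c₂ · y / √(c₂‖y‖² + c − χ(y)) for y in the sublevel set S := {y ∈ ℝⁿ : χ(y) ≤ c}. Then S is compact, the quantity c₂‖y‖² + c − χ(y) is strictly positive on S, and F restricted to S is a homeomorphism from S onto the closed Euclidean unit ball of ℝⁿ which maps the level set {χ = c} onto the unit sphere and satisfies F(0) = 0. -/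
open Real Set

lemma ray_deriv1 {n : ℕ} (χ : EuclideanSpace ℝ (Fin n) → ℝ) (hχ : ContDiff ℝ 2 χ)
    (y : EuclideanSpace ℝ (Fin n)) (t : ℝ) :
    HasDerivAt (fun s : ℝ => χ (s • y)) (fderiv ℝ χ (t • y) y) t := by
  have h1 : HasDerivAt (fun s : ℝ => s • y) ((1:ℝ) • y) t := (hasDerivAt_id t).smul_const y
  rw [one_smul] at h1
  exact ((hχ.differentiable (by norm_num) (t • y)).hasFDerivAt).comp_hasDerivAt t h1

lemma ray_deriv2 {n : ℕ} (χ : EuclideanSpace ℝ (Fin n) → ℝ) (hχ : ContDiff ℝ 2 χ)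
    (y : EuclideanSpace ℝ (Fin n)) (t : ℝ) :
    HasDerivAt (fun s : ℝ => fderiv ℝ χ (s • y) y) (fderiv ℝ (fderiv ℝ χ) (t • y) y y) t := by
  have h1 : HasDerivAt (fun s : ℝ => s • y) ((1:ℝ) • y) t := (hasDerivAt_id t).smul_const y
  rw [one_smul] at h1
  have hd : Differentiable ℝ (fderiv ℝ χ) := by
    have := (hχ.fderiv_right (m := 1) (by norm_num)).differentiable (by norm_num)
    exact this
  have h2 : HasDerivAt (fun s : ℝ => fderiv ℝ χ (s • y)) (fderiv ℝ (fderiv ℝ χ) (t • y) y) t :=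
    ((hd (t • y)).hasFDerivAt).comp_hasDerivAt t h1
  have h3 := h2.clm_apply (hasDerivAt_const t y)
  simpa using h3

lemma ray_g'_ge {n : ℕ} (χ : EuclideanSpace ℝ (Fin n) → ℝ) (hχ : ContDiff ℝ 2 χ)
    (hdχ0 : fderiv ℝ χ 0 = 0) (lam : ℝ)
    (hHess : ∀ y u : EuclideanSpace ℝ (Fin n),
      lam * ‖u‖ ^ 2 ≤ fderiv ℝ (fderiv ℝ χ) y u u)
    (y : EuclideanSpace ℝ (Fin n)) {t : ℝ} (ht : 0 ≤ t) :
    lam * ‖y‖ ^ 2 * t ≤ fderiv ℝ χ (t • y) y := by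
  have hmono : Monotone (fun s : ℝ => fderiv ℝ χ (s • y) y - lam * ‖y‖ ^ 2 * s) := by
    apply monotone_of_hasDerivAt_nonneg
      (f' := fun s => fderiv ℝ (fderiv ℝ χ) (s • y) y y - lam * ‖y‖ ^ 2)
    · intro s
      have h2 : HasDerivAt (fun x : ℝ => lam * ‖y‖ ^ 2 * x) (lam * ‖y‖ ^ 2) s := by
        simpa using (hasDerivAt_id s).const_mul (lam * ‖y‖ ^ 2)
      exact (ray_deriv2 χ hχ y s).sub h2
    · intro s
      simp only [Pi.zero_apply, sub_nonneg]
      exact hHess (s • y) y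
  have h0 := hmono ht
  simp only [zero_smul, hdχ0, mul_zero, sub_zero, ContinuousLinearMap.zero_apply] at h0
  linarith [h0]

lemma ray_strictMono {n : ℕ} (χ : EuclideanSpace ℝ (Fin n) → ℝ) (hχ : ContDiff ℝ 2 χ)
    (hdχ0 : fderiv ℝ χ 0 = 0) (lam : ℝ) (hlam : 0 < lam)
    (hHess : ∀ y u : EuclideanSpace ℝ (Fin n),
      lam * ‖u‖ ^ 2 ≤ fderiv ℝ (fderiv ℝ χ) y u u)
    {y : EuclideanSpace ℝ (Fin n)} (hy : y ≠ 0) :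
    StrictMonoOn (fun s : ℝ => χ (s • y)) (Set.Ici 0) := by
  apply strictMonoOn_of_deriv_pos (convex_Ici 0)
  · exact ((hχ.continuous).comp (continuous_id.smul continuous_const)).continuousOn
  · intro s hs
    rw [interior_Ici, mem_Ioi] at hs
    rw [(ray_deriv1 χ hχ y s).deriv]
    have := ray_g'_ge χ hχ hdχ0 lam hHess y hs.le
    have hny : 0 < ‖y‖ ^ 2 := pow_pos (norm_pos_iff.mpr hy) 2
    nlinarith [mul_pos (mul_pos hlam hny) hs]

lemma ray_lb {n : ℕ} (χ : EuclideanSpace ℝ (Fin n) → ℝ) (hχ : ContDiff ℝ 2 χ)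
    (hχ0 : χ 0 = 0) (hdχ0 : fderiv ℝ χ 0 = 0) (lam : ℝ)
    (hHess : ∀ y u : EuclideanSpace ℝ (Fin n),
      lam * ‖u‖ ^ 2 ≤ fderiv ℝ (fderiv ℝ χ) y u u)
    (y : EuclideanSpace ℝ (Fin n)) {t : ℝ} (ht : 0 ≤ t) :
    lam / 2 * ‖y‖ ^ 2 * t ^ 2 ≤ χ (t • y) := by
  have hmono : MonotoneOn (fun s : ℝ => χ (s • y) - lam / 2 * ‖y‖ ^ 2 * s ^ 2) (Set.Ici 0) := by
    apply monotoneOn_of_hasDerivWithinAt_nonneg (convex_Ici 0)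
      (f' := fun s => fderiv ℝ χ (s • y) y - lam * ‖y‖ ^ 2 * s)
    · apply Continuous.continuousOn
      exact ((hχ.continuous).comp (continuous_id.smul continuous_const)).sub (by continuity)
    · intro s _
      have h2 : HasDerivAt (fun s : ℝ => lam / 2 * ‖y‖ ^ 2 * s ^ 2)
          (lam * ‖y‖ ^ 2 * s) s := by
        have := ((hasDerivAt_pow 2 s).const_mul (lam / 2 * ‖y‖ ^ 2))
        refine this.congr_deriv ?_
        ring
      exact ((ray_deriv1 χ hχ y s).sub h2).hasDerivWithinAt
    · intro s hs
      rw [interior_Ici, Set.mem_Ioi] at hs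
      have := ray_g'_ge χ hχ hdχ0 lam hHess y hs.le
      simp only [sub_nonneg]
      linarith
  have h0 := hmono Set.self_mem_Ici ht ht
  simp only [zero_smul, hχ0] at h0
  nlinarith [h0]

set_option maxHeartbeats 2000000 in
/-- Change of coordinates in the First Step of the proof of Proposition 4.6:
for a strictly convex `χ` with minimum `0` at the origin, the map
`F(y) = √c₂ · y / √(c₂‖y‖² + c − χ(y))` identifies the compact sublevel set
`{χ ≤ c}` with the closed unit ball, sending the level set `{χ = c}` onto the
unit sphere and the origin to the origin. -/
theorem stmt_13 (n : ℕ)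
    (χ : EuclideanSpace ℝ (Fin n) → ℝ) (hχ : ContDiff ℝ 2 χ)
    (hχ0 : χ 0 = 0) (hdχ0 : fderiv ℝ χ 0 = 0)
    (lam : ℝ) (hlam : 0 < lam)
    (hHess : ∀ y u : EuclideanSpace ℝ (Fin n),
      lam * ‖u‖ ^ 2 ≤ fderiv ℝ (fderiv ℝ χ) y u u)
    (c c₂ : ℝ) (hc : 0 < c) (hc₂ : 0 < c₂)
    (F : EuclideanSpace ℝ (Fin n) → EuclideanSpace ℝ (Fin n))
    (hF : ∀ y, F y = (Real.sqrt c₂ / Real.sqrt (c₂ * ‖y‖ ^ 2 + c - χ y)) • y) :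
    IsCompact {y : EuclideanSpace ℝ (Fin n) | χ y ≤ c} ∧
    (∀ y ∈ {y : EuclideanSpace ℝ (Fin n) | χ y ≤ c},
      0 < c₂ * ‖y‖ ^ 2 + c - χ y) ∧
    (∃ e : {y : EuclideanSpace ℝ (Fin n) | χ y ≤ c} ≃ₜ
        (Metric.closedBall (0 : EuclideanSpace ℝ (Fin n)) 1),
      ∀ y : {y : EuclideanSpace ℝ (Fin n) | χ y ≤ c},
        (e y : EuclideanSpace ℝ (Fin n)) = F y) ∧
    F '' {y : EuclideanSpace ℝ (Fin n) | χ y = c} =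
      Metric.sphere (0 : EuclideanSpace ℝ (Fin n)) 1 ∧
    F 0 = 0 := by
  have hlb : ∀ y : EuclideanSpace ℝ (Fin n), lam / 2 * ‖y‖ ^ 2 ≤ χ y := by
    intro y
    have := ray_lb χ hχ hχ0 hdχ0 lam hHess y (t := 1) zero_le_one
    simpa using this
  have hF0 : F 0 = 0 := by rw [hF]; simp
  -- positivity of Q on the sublevel set
  have hQpos : ∀ y ∈ {y : EuclideanSpace ℝ (Fin n) | χ y ≤ c},
      0 < c₂ * ‖y‖ ^ 2 + c - χ y := by
    intro y hy
    rcases eq_or_ne y 0 with rfl | hy0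
    · simp only [norm_zero, hχ0]
      nlinarith
    · have h1 : 0 < c₂ * ‖y‖ ^ 2 := by
        have := norm_pos_iff.mpr hy0
        positivity
      have h2 : χ y ≤ c := hy
      linarith
  -- compactness
  have hcomp : IsCompact {y : EuclideanSpace ℝ (Fin n) | χ y ≤ c} := by
    apply Metric.isCompact_of_isClosed_isBounded
    · exact isClosed_le (hχ.continuous) continuous_const
    · rw [isBounded_iff_forall_norm_le]
      refine ⟨Real.sqrt (2 * c / lam), fun y hy => ?_⟩
      have h1 := hlb y
      have h2 : χ y ≤ c := hy
      have h3 : ‖y‖ ^ 2 ≤ 2 * c / lam := by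
        rw [le_div_iff₀ hlam]; nlinarith
      calc ‖y‖ = Real.sqrt (‖y‖ ^ 2) := by rw [Real.sqrt_sq (norm_nonneg y)]
        _ ≤ Real.sqrt (2 * c / lam) := Real.sqrt_le_sqrt h3
  -- norm formula
  have hnorm : ∀ y : EuclideanSpace ℝ (Fin n),
      ‖F y‖ = (Real.sqrt c₂ / Real.sqrt (c₂ * ‖y‖ ^ 2 + c - χ y)) * ‖y‖ := by
    intro y
    rw [hF, norm_smul, Real.norm_eq_abs,
      abs_of_nonneg (div_nonneg (Real.sqrt_nonneg _) (Real.sqrt_nonneg _))]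
  have hsq : ∀ y : EuclideanSpace ℝ (Fin n), 0 < c₂ * ‖y‖ ^ 2 + c - χ y →
      ‖F y‖ ^ 2 * (c₂ * ‖y‖ ^ 2 + c - χ y) = c₂ * ‖y‖ ^ 2 := by
    intro y hQ
    rw [hnorm y, mul_pow, div_pow, Real.sq_sqrt hc₂.le, Real.sq_sqrt hQ.le]
    field_simp
  -- F maps the sublevel set into the closed ball
  have hFle : ∀ y ∈ {y : EuclideanSpace ℝ (Fin n) | χ y ≤ c}, ‖F y‖ ≤ 1 := by
    intro y hy
    have hQ := hQpos y hy
    have h1 := hsq y hQ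
    have h2 : χ y ≤ c := hy
    nlinarith [norm_nonneg (F y), sq_nonneg (‖F y‖ - 1), sq_nonneg (‖F y‖ + 1)]
  -- strict monotonicity of the norm of F along rays
  have hmono : ∀ (y : EuclideanSpace ℝ (Fin n)), y ≠ 0 → ∀ s t : ℝ, 0 ≤ s → s < t →
      s • y ∈ {y : EuclideanSpace ℝ (Fin n) | χ y ≤ c} →
      t • y ∈ {y : EuclideanSpace ℝ (Fin n) | χ y ≤ c} →
      ‖F (s • y)‖ ^ 2 < ‖F (t • y)‖ ^ 2 := by
    intro y hy s t hs hst hsS htS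
    have ht : 0 < t := lt_of_le_of_lt hs hst
    have hQs := hQpos _ hsS
    have hQt := hQpos _ htS
    have h1 := hsq _ hQs
    have h2 := hsq _ hQt
    have hχlt : χ (s • y) < χ (t • y) :=
      ray_strictMono χ hχ hdχ0 lam hlam hHess hy (mem_Ici.mpr hs) (mem_Ici.mpr ht.le) hst
    have hns : ‖s • y‖ ^ 2 = s ^ 2 * ‖y‖ ^ 2 := by
      rw [norm_smul, mul_pow, Real.norm_eq_abs, sq_abs]
    have hnt : ‖t • y‖ ^ 2 = t ^ 2 * ‖y‖ ^ 2 := by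
      rw [norm_smul, mul_pow, Real.norm_eq_abs, sq_abs]
    have hny : 0 < ‖y‖ ^ 2 := pow_pos (norm_pos_iff.mpr hy) 2
    have hAlt : c₂ * ‖s • y‖ ^ 2 < c₂ * ‖t • y‖ ^ 2 := by
      rw [hns, hnt]
      have h4 : s ^ 2 < t ^ 2 := by nlinarith
      exact mul_lt_mul_of_pos_left (mul_lt_mul_of_pos_right h4 hny) hc₂
    have hBt : 0 ≤ c - χ (t • y) := by
      have : χ (t • y) ≤ c := htS
      linarith
    have hBs : 0 < c - χ (s • y) := by linarith
    -- a = A/(A+Bs), b = A'/(A'+Bt)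
    have ha : ‖F (s • y)‖ ^ 2 = c₂ * ‖s • y‖ ^ 2 / (c₂ * ‖s • y‖ ^ 2 + c - χ (s • y)) := by
      field_simp at h1 ⊢
      linarith [h1]
    have hb : ‖F (t • y)‖ ^ 2 = c₂ * ‖t • y‖ ^ 2 / (c₂ * ‖t • y‖ ^ 2 + c - χ (t • y)) := by
      field_simp at h2 ⊢
      linarith [h2]
    rw [ha, hb, div_lt_div_iff₀ hQs hQt]
    have hA : 0 ≤ c₂ * ‖s • y‖ ^ 2 := by positivity
    nlinarith
  -- injectivity on the sublevel set
  have hinj : ∀ y₁ ∈ {y : EuclideanSpace ℝ (Fin n) | χ y ≤ c},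
      ∀ y₂ ∈ {y : EuclideanSpace ℝ (Fin n) | χ y ≤ c}, F y₁ = F y₂ → y₁ = y₂ := by
    have hρ : ∀ y ∈ {y : EuclideanSpace ℝ (Fin n) | χ y ≤ c},
        0 < Real.sqrt c₂ / Real.sqrt (c₂ * ‖y‖ ^ 2 + c - χ y) := fun y hy =>
      div_pos (Real.sqrt_pos.mpr hc₂) (Real.sqrt_pos.mpr (hQpos y hy))
    have hzero : ∀ y ∈ {y : EuclideanSpace ℝ (Fin n) | χ y ≤ c}, F y = 0 → y = 0 := by
      intro y hy h0
      rw [hF] at h0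
      rcases smul_eq_zero.mp h0 with h | h
      · exact absurd h (ne_of_gt (hρ y hy))
      · exact h
    intro y₁ h₁ y₂ h₂ heq
    rcases eq_or_ne y₁ 0 with rfl | hy₁
    · rw [hF0] at heq
      exact (hzero y₂ h₂ heq.symm).symm
    rcases eq_or_ne y₂ 0 with rfl | hy₂
    · rw [hF0] at heq
      exact hzero y₁ h₁ heq
    -- both nonzero; y₂ = a • y₁ with a > 0
    have heq' := heq
    rw [hF y₁, hF y₂] at heq'
    set ρ₁ := Real.sqrt c₂ / Real.sqrt (c₂ * ‖y₁‖ ^ 2 + c - χ y₁) with hρ₁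
    set ρ₂ := Real.sqrt c₂ / Real.sqrt (c₂ * ‖y₂‖ ^ 2 + c - χ y₂) with hρ₂
    have hρ₁pos : 0 < ρ₁ := hρ y₁ h₁
    have hρ₂pos : 0 < ρ₂ := hρ y₂ h₂
    have hy₂eq : y₂ = (ρ₂⁻¹ * ρ₁) • y₁ := by
      have h3 : ρ₂⁻¹ • (ρ₁ • y₁) = ρ₂⁻¹ • (ρ₂ • y₂) := by rw [heq']
      rw [smul_smul, smul_smul, inv_mul_cancel₀ hρ₂pos.ne', one_smul] at h3
      exact h3.symm
    set a := ρ₂⁻¹ * ρ₁ with haa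
    have hapos : 0 < a := mul_pos (inv_pos.mpr hρ₂pos) hρ₁pos
    have hmemA : a • y₁ ∈ {y : EuclideanSpace ℝ (Fin n) | χ y ≤ c} := hy₂eq ▸ h₂
    have hmem1 : (1 : ℝ) • y₁ ∈ {y : EuclideanSpace ℝ (Fin n) | χ y ≤ c} := by
      rw [one_smul]; exact h₁
    have hnormeq : ‖F y₁‖ ^ 2 = ‖F y₂‖ ^ 2 := by rw [heq]
    rcases lt_trichotomy a 1 with hlt | heq1 | hgt
    · exfalso
      have := hmono y₁ hy₁ a 1 hapos.le hlt hmemA hmem1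
      rw [one_smul, ← hy₂eq] at this
      linarith
    · rw [hy₂eq, heq1, one_smul]
    · exfalso
      have := hmono y₁ hy₁ 1 a zero_le_one hgt hmem1 hmemA
      rw [one_smul, ← hy₂eq] at this
      linarith
  -- continuity of F where Q is positive
  have hQcont : Continuous (fun y : EuclideanSpace ℝ (Fin n) => c₂ * ‖y‖ ^ 2 + c - χ y) := by
    exact ((continuous_const.mul ((continuous_norm).pow 2)).add continuous_const).sub
      hχ.continuous
  have hFcont : ContinuousOn F {y : EuclideanSpace ℝ (Fin n) | 0 < c₂ * ‖y‖ ^ 2 + c - χ y} := by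
    have : ContinuousOn (fun y : EuclideanSpace ℝ (Fin n) =>
        (Real.sqrt c₂ / Real.sqrt (c₂ * ‖y‖ ^ 2 + c - χ y)) • y)
        {y : EuclideanSpace ℝ (Fin n) | 0 < c₂ * ‖y‖ ^ 2 + c - χ y} := by
      apply ContinuousOn.fun_smul _ continuousOn_id
      apply ContinuousOn.div continuousOn_const
        (Real.continuous_sqrt.comp hQcont).continuousOn
      intro y hy
      exact (Real.sqrt_pos.mpr hy).ne'
    have heq : F = fun y => (Real.sqrt c₂ / Real.sqrt (c₂ * ‖y‖ ^ 2 + c - χ y)) • y :=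
      funext hF
    rw [heq]
    exact this
  -- surjectivity
  have hsurj : ∀ x : EuclideanSpace ℝ (Fin n), ‖x‖ ≤ 1 →
      ∃ y ∈ {y : EuclideanSpace ℝ (Fin n) | χ y ≤ c}, F y = x := by
    intro x hx
    rcases eq_or_ne x 0 with rfl | hx0
    · exact ⟨0, by simp only [mem_setOf_eq, hχ0]; exact hc.le, hF0⟩
    have hnx : 0 < ‖x‖ := norm_pos_iff.mpr hx0
    have hnx2 : 0 < ‖x‖ ^ 2 := by positivity
    set r : ℝ := 2 * c / (lam * ‖x‖ ^ 2) with hr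
    have hr0 : 0 < r := by positivity
    have hval : c ≤ χ ((r + 1) • x) := by
      have h1 := ray_lb χ hχ hχ0 hdχ0 lam hHess x (t := r + 1) (by linarith)
      have h2 : lam / 2 * ‖x‖ ^ 2 * r = c := by
        rw [hr]; field_simp
      nlinarith [sq_nonneg r]
    have hcont1 : ContinuousOn (fun t : ℝ => χ (t • x)) (Set.Icc 0 (r + 1)) :=
      ((hχ.continuous).comp (continuous_id.smul continuous_const)).continuousOn
    obtain ⟨T, hTmem, hTval⟩ := intermediate_value_Icc (by linarith : (0:ℝ) ≤ r + 1) hcont1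
      (by constructor
          · simp only [zero_smul, hχ0]; exact hc.le
          · exact hval)
    have hTval' : χ (T • x) = c := hTval
    have hT0 : 0 < T := by
      rcases hTmem.1.lt_or_eq with h | h
      · exact h
      · exfalso
        rw [← h, zero_smul, hχ0] at hTval'
        exact hc.ne hTval'
    have hmemS : ∀ t ∈ Set.Icc (0:ℝ) T, t • x ∈ {y : EuclideanSpace ℝ (Fin n) | χ y ≤ c} := by
      intro t ht
      have := (ray_strictMono χ hχ hdχ0 lam hlam hHess hx0).monotoneOn
        (mem_Ici.mpr ht.1) (mem_Ici.mpr (ht.1.trans ht.2)) ht.2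
      simp only [mem_setOf_eq]
      calc χ (t • x) ≤ χ (T • x) := this
        _ = c := hTval'
    have hmc : ContinuousOn (fun t : ℝ => ‖F (t • x)‖) (Set.Icc 0 T) := by
      apply ContinuousOn.norm
      apply hFcont.comp (continuous_id.smul continuous_const).continuousOn
      intro t ht
      exact hQpos _ (hmemS t ht)
    have hm0 : ‖F ((0:ℝ) • x)‖ = 0 := by
      rw [zero_smul, hF0, norm_zero]
    have hmT : ‖F (T • x)‖ = 1 := by
      have hQT := hQpos _ (hmemS T ⟨hT0.le, le_refl T⟩)
      have h1 := hsq _ hQT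
      have h3 : 0 < c₂ * ‖T • x‖ ^ 2 := by
        have h5 : 0 < ‖T • x‖ := norm_pos_iff.mpr (smul_ne_zero hT0.ne' hx0)
        positivity
      have he : c₂ * ‖T • x‖ ^ 2 + c - χ (T • x) = c₂ * ‖T • x‖ ^ 2 := by
        rw [hTval']; ring
      rw [he] at h1
      have h4 : ‖F (T • x)‖ ^ 2 = 1 := mul_right_cancel₀ h3.ne' (by rw [h1, one_mul])
      have h6 : (‖F (T • x)‖ - 1) * (‖F (T • x)‖ + 1) = 0 := by linear_combination h4
      rcases mul_eq_zero.mp h6 with h7 | h7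
      · linarith
      · linarith [norm_nonneg (F (T • x))]
    obtain ⟨t, htmem, htval⟩ := intermediate_value_Icc hT0.le hmc
      (by rw [hm0, hmT]; exact ⟨norm_nonneg x, hx⟩)
    refine ⟨t • x, hmemS t htmem, ?_⟩
    have hQ := hQpos _ (hmemS t htmem)
    have hρpos : 0 ≤ Real.sqrt c₂ / Real.sqrt (c₂ * ‖t • x‖ ^ 2 + c - χ (t • x)) :=
      div_nonneg (Real.sqrt_nonneg _) (Real.sqrt_nonneg _)
    have hFeq : F (t • x) =
        ((Real.sqrt c₂ / Real.sqrt (c₂ * ‖t • x‖ ^ 2 + c - χ (t • x))) * t) • x := by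
      rw [hF, smul_smul]
    have hnFeq : ‖F (t • x)‖ =
        ((Real.sqrt c₂ / Real.sqrt (c₂ * ‖t • x‖ ^ 2 + c - χ (t • x))) * t) * ‖x‖ := by
      rw [hFeq, norm_smul, Real.norm_eq_abs, abs_of_nonneg (mul_nonneg hρpos htmem.1)]
    have hscal : (Real.sqrt c₂ / Real.sqrt (c₂ * ‖t • x‖ ^ 2 + c - χ (t • x))) * t = 1 := by
      have htval' : ‖F (t • x)‖ = ‖x‖ := htval
      rw [hnFeq] at htval'
      apply mul_right_cancel₀ hnx.ne'
      rw [htval', one_mul]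
    rw [hFeq, hscal, one_smul]
  -- the homeomorphism
  have hmemball : ∀ y ∈ {y : EuclideanSpace ℝ (Fin n) | χ y ≤ c},
      F y ∈ Metric.closedBall (0 : EuclideanSpace ℝ (Fin n)) 1 := by
    intro y hy
    rw [Metric.mem_closedBall, dist_zero_right]
    exact hFle y hy
  haveI : CompactSpace {y : EuclideanSpace ℝ (Fin n) | χ y ≤ c} :=
    isCompact_iff_compactSpace.mp hcomp
  let φ : {y : EuclideanSpace ℝ (Fin n) | χ y ≤ c} →
      (Metric.closedBall (0 : EuclideanSpace ℝ (Fin n)) 1) :=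
    fun y => ⟨F y, hmemball y y.2⟩
  have hφc : Continuous φ := by
    apply Continuous.subtype_mk
    apply ContinuousOn.restrict
    exact hFcont.mono (fun y hy => hQpos y hy)
  have hφbij : Function.Bijective φ := by
    constructor
    · intro a b hab
      exact Subtype.ext (hinj a a.2 b b.2 (Subtype.ext_iff.mp hab))
    · intro x
      have hx : ‖(x : EuclideanSpace ℝ (Fin n))‖ ≤ 1 := by
        have := x.2
        rwa [Metric.mem_closedBall, dist_zero_right] at this
      obtain ⟨y, hy, hxy⟩ := hsurj x hx
      exact ⟨⟨y, hy⟩, Subtype.ext hxy⟩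
  let e := Continuous.homeoOfEquivCompactToT2
    (f := Equiv.ofBijective φ hφbij) hφc
  -- the image of the level set is the sphere
  have himage : F '' {y : EuclideanSpace ℝ (Fin n) | χ y = c} =
      Metric.sphere (0 : EuclideanSpace ℝ (Fin n)) 1 := by
    ext x
    constructor
    · rintro ⟨y, hy, rfl⟩
      have hyc : χ y = c := hy
      have hyS : y ∈ {y : EuclideanSpace ℝ (Fin n) | χ y ≤ c} := le_of_eq hyc
      have hy0 : y ≠ 0 := by
        rintro rfl
        rw [hχ0] at hyc
        exact hc.ne hyc
      have hQ := hQpos y hyS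
      have h1 := hsq y hQ
      have h3 : 0 < c₂ * ‖y‖ ^ 2 := by
        have h5 : 0 < ‖y‖ := norm_pos_iff.mpr hy0
        positivity
      have he2 : c₂ * ‖y‖ ^ 2 + c - χ y = c₂ * ‖y‖ ^ 2 := by rw [hyc]; ring
      rw [he2] at h1
      have h4 : ‖F y‖ ^ 2 = 1 := mul_right_cancel₀ h3.ne' (by rw [h1, one_mul])
      have h6 : (‖F y‖ - 1) * (‖F y‖ + 1) = 0 := by linear_combination h4
      rw [mem_sphere_zero_iff_norm]
      rcases mul_eq_zero.mp h6 with h7 | h7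
      · linarith
      · linarith [norm_nonneg (F y)]
    · intro hx
      rw [mem_sphere_zero_iff_norm] at hx
      obtain ⟨y, hy, rfl⟩ := hsurj x hx.le
      refine ⟨y, ?_, rfl⟩
      have hQ := hQpos y hy
      have h1 := hsq y hQ
      rw [hx] at h1
      simp only [one_pow, one_mul] at h1
      have : χ y = c := by linarith
      exact this
  exact ⟨hcomp, hQpos, ⟨e, fun y => rfl⟩, himage, hF0⟩
end
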